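/- Let V > 0, 0 < Δv < V, c > 2 and V − Δv < u < V. Then ∫₀^{V−Δv} (u − v)·((V − u)/Δv)^c·exp((c − 2)(v + Δv − V)/Δv) dv + ∫_{V−Δv}^u (u − v)·((V − u)/(V − v))^c dv = (Δv/(c − 2))·((V − u)/Δv)^c·[u + Δv − V − u·exp(−(c − 2)(V − Δv)/Δv)] + (Δv/(c − 2))²·((V − u)/Δv)^c·[1 − exp(−(c − 2)(V − Δv)/Δv)] + ((V − u)^c/(c − 1))·[(V − u − Δv)·Δv^{1−c} + (V − u)^{2−c}/(c − 2) − Δv^{2−c}/(c − 2)]. -/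

import Mathlib

open Real

/-- Explicit evaluation of the acceleration integral `R_A(u)` in the regime
`V_max − Δv < u < V_max` for the Fokker-Planck traffic model with desired speed
`V_A = min{v + Δv, V_max}`. -/
theorem acceleration_integral_mixed_eval (V Δv c u : ℝ) (hV : 0 < V) (hΔ0 : 0 < Δv)
    (hΔV : Δv < V) (hc : 2 < c) (hu1 : V - Δv < u) (hu2 : u < V) :
    (∫ v in (0 : ℝ)..(V - Δv),
        (u - v) * ((V - u) / Δv) ^ c * Real.exp ((c - 2) * (v + Δv - V) / Δv))
      + ∫ v in (V - Δv)..u, (u - v) * ((V - u) / (V - v)) ^ c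
    = Δv / (c - 2) * ((V - u) / Δv) ^ c
          * (u + Δv - V - u * Real.exp (-(c - 2) * (V - Δv) / Δv))
      + (Δv / (c - 2)) ^ 2 * ((V - u) / Δv) ^ c
          * (1 - Real.exp (-(c - 2) * (V - Δv) / Δv))
      + (V - u) ^ c / (c - 1)
          * ((V - u - Δv) * Δv ^ (1 - c) + (V - u) ^ (2 - c) / (c - 2)
            - Δv ^ (2 - c) / (c - 2)) := by
  have hc2 : c - 2 ≠ 0 := by linarith
  have hc1 : c - 1 ≠ 0 := by linarith
  have hΔ : Δv ≠ 0 := ne_of_gt hΔ0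
  have hVu : (0 : ℝ) < V - u := by linarith
  -- antiderivative for the first integral
  have F1deriv : ∀ x : ℝ, HasDerivAt (fun v => Real.exp ((c - 2) * (v + Δv - V) / Δv)
      * ((u - v) * Δv / (c - 2) + (Δv / (c - 2)) ^ 2))
      ((u - x) * Real.exp ((c - 2) * (x + Δv - V) / Δv)) x := by
    intro x
    have h1 : HasDerivAt (fun v : ℝ => (c - 2) * (v + Δv - V) / Δv) ((c - 2) / Δv) x := by
      have h := ((((hasDerivAt_id x).add_const Δv).sub_const V).const_mul (c - 2)).div_const Δv
      refine h.congr_deriv ?_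
      ring
    have h2 := h1.exp
    have h3 : HasDerivAt (fun v : ℝ => (u - v) * Δv / (c - 2) + (Δv / (c - 2)) ^ 2)
        (-Δv / (c - 2)) x := by
      have h := ((((hasDerivAt_id x).const_sub u).mul_const Δv).div_const (c - 2)).add_const
        ((Δv / (c - 2)) ^ 2)
      refine h.congr_deriv ?_
      ring
    have h4 := h2.mul h3
    refine h4.congr_deriv ?_
    field_simp
    ring
  have key1 := intervalIntegral.integral_eq_sub_of_hasDerivAt
      (f := fun v => Real.exp ((c - 2) * (v + Δv - V) / Δv)
        * ((u - v) * Δv / (c - 2) + (Δv / (c - 2)) ^ 2))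
      (f' := fun x => (u - x) * Real.exp ((c - 2) * (x + Δv - V) / Δv))
      (a := (0 : ℝ)) (b := V - Δv)
      (fun x _ => F1deriv x)
      (Continuous.intervalIntegrable (by fun_prop) _ _)
  have I1 : (∫ v in (0 : ℝ)..(V - Δv),
        (u - v) * ((V - u) / Δv) ^ c * Real.exp ((c - 2) * (v + Δv - V) / Δv))
      = ((V - u) / Δv) ^ c *
        ((Real.exp ((c - 2) * ((V - Δv) + Δv - V) / Δv)
            * ((u - (V - Δv)) * Δv / (c - 2) + (Δv / (c - 2)) ^ 2))
          - Real.exp ((c - 2) * (0 + Δv - V) / Δv)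
            * ((u - 0) * Δv / (c - 2) + (Δv / (c - 2)) ^ 2)) := by
    rw [← key1, ← intervalIntegral.integral_const_mul]
    apply intervalIntegral.integral_congr
    intro v _
    ring
  -- antiderivative for the second integral
  have F2deriv : ∀ x ∈ Set.uIcc (V - Δv) u,
      HasDerivAt (fun v => (V - u) ^ c * ((V - v) ^ (2 - c) / (c - 2)
          - (V - u) * (V - v) ^ (1 - c) / (c - 1)))
        ((u - x) * ((V - u) / (V - x)) ^ c) x := by
    intro x hx
    rw [Set.uIcc_of_le (le_of_lt hu1)] at hx
    have hx2 : (0 : ℝ) < V - x := by have := hx.2; linarith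
    have hbase : HasDerivAt (fun v : ℝ => V - v) (-1) x := (hasDerivAt_id x).const_sub V
    have hp : ∀ p : ℝ, HasDerivAt (fun v : ℝ => (V - v) ^ p)
        (-(p * (V - x) ^ (p - 1))) x := by
      intro p
      have h := (Real.hasDerivAt_rpow_const (x := V - x) (p := p)
        (Or.inl hx2.ne')).comp x hbase
      refine h.congr_deriv ?_
      ring
    have h1 := (hp (2 - c)).div_const (c - 2)
    have h2 := ((hp (1 - c)).const_mul (V - u)).div_const (c - 1)
    have h3 := (h1.sub h2).const_mul ((V - u) ^ c)
    refine h3.congr_deriv ?_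
    have e1 : ((V - u) / (V - x)) ^ c = (V - u) ^ c * ((V - x) ^ c)⁻¹ := by
      rw [Real.div_rpow hVu.le hx2.le, div_eq_mul_inv]
    have e2 : (V - x) ^ (2 - c - 1) = (V - x) * ((V - x) ^ c)⁻¹ := by
      rw [show (2 - c - 1 : ℝ) = 1 + -c by ring, Real.rpow_add hx2, Real.rpow_one,
        Real.rpow_neg hx2.le]
    have e3 : (V - x) ^ (1 - c - 1) = ((V - x) ^ c)⁻¹ := by
      rw [show (1 - c - 1 : ℝ) = -c by ring, Real.rpow_neg hx2.le]
    rw [e1, e2, e3]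
    field_simp
    ring
  have hint2 : IntervalIntegrable (fun v => (u - v) * ((V - u) / (V - v)) ^ c)
      MeasureTheory.volume (V - Δv) u := by
    apply ContinuousOn.intervalIntegrable
    apply ContinuousOn.mul
    · exact (continuousOn_const.sub continuousOn_id)
    · apply ContinuousOn.rpow_const
      · apply ContinuousOn.div continuousOn_const
          (continuousOn_const.sub continuousOn_id)
        intro x hx
        rw [Set.uIcc_of_le (le_of_lt hu1)] at hx
        have : x ≤ u := hx.2
        intro h
        have : V - x = 0 := h
        nlinarith
      · intro x hx
        exact Or.inr (by linarith)
  have I2 := intervalIntegral.integral_eq_sub_of_hasDerivAt F2deriv hint2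
  rw [I1, I2]
  -- simplify endpoint values
  have earg1 : (c - 2) * ((V - Δv) + Δv - V) / Δv = 0 := by field_simp; ring
  have earg2 : (c - 2) * (0 + Δv - V) / Δv = -(c - 2) * (V - Δv) / Δv := by ring
  have eV : V - (V - Δv) = Δv := by ring
  have eu : V - u ≠ 0 := hVu.ne'
  rw [earg1, earg2, eV, Real.exp_zero]
  have hB : Δv ^ (2 - c) = Δv * Δv ^ (1 - c) := by
    rw [show (2 - c : ℝ) = 1 + (1 - c) by ring, Real.rpow_add hΔ0, Real.rpow_one]
  have hP : (V - u) ^ (2 - c) = (V - u) * (V - u) ^ (1 - c) := by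
    rw [show (2 - c : ℝ) = 1 + (1 - c) by ring, Real.rpow_add hVu, Real.rpow_one]
  rw [hB, hP]
  field_simp
  ring
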